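/- Let f : X → Y be a morphism of schemes whose underlying map on points is injective. Then dim X ≤ dim Y (as topological Krull dimensions, allowing the value ∞). -/

import Mathlib

open AlgebraicGeometry

/-- A morphism of schemes that is injective on underlying points
satisfies `dim X ≤ dim Y` for the topological Krull dimensions. -/
theorem dim_le_dim_of_injective {X Y : Scheme} (f : X ⟶ Y)
    (hinj : Function.Injective f.base) :
    topologicalKrullDim X ≤ topologicalKrullDim Y := by
  have hc : Continuous f.base := f.base.hom.continuous
  let g : TopologicalSpace.IrreducibleCloseds X → TopologicalSpace.IrreducibleCloseds Y :=
    fun s => ⟨closure (f.base '' s),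
      (s.isIrreducible'.image _ hc.continuousOn).closure, isClosed_closure⟩
  have hgen : ∀ s : TopologicalSpace.IrreducibleCloseds X,
      IsGenericPoint (f.base s.isIrreducible'.genericPoint) (g s : Set Y) := by
    intro s
    have hξ : IsGenericPoint s.isIrreducible'.genericPoint (s : Set X) := by
      exact (by simpa [s.isClosed'.closure_eq] using s.isIrreducible'.isGenericPoint_genericPoint_closure :
        IsGenericPoint _ s.carrier)
    refine subset_antisymm ?_ ?_
    · exact closure_minimal (Set.singleton_subset_iff.2
        (subset_closure ⟨_, hξ.mem, rfl⟩)) isClosed_closure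
    · refine closure_minimal ?_ isClosed_closure
      calc f.base '' (s : Set X) = f.base '' closure {s.isIrreducible'.genericPoint} := by
            rw [hξ]
        _ ⊆ closure (f.base '' {s.isIrreducible'.genericPoint}) :=
            image_closure_subset_closure_image hc
        _ = closure {f.base s.isIrreducible'.genericPoint} := by rw [Set.image_singleton]
  have hg : StrictMono g := by
    intro s t hst
    refine lt_of_le_of_ne (closure_mono (Set.image_mono hst.le)) ?_
    intro h
    apply hst.ne
    have := (hgen s).eq (h ▸ hgen t)
    have hxi := hinj this
    ext1
    have hξs : IsGenericPoint s.isIrreducible'.genericPoint (s : Set X) := by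
      exact (by simpa [s.isClosed'.closure_eq] using s.isIrreducible'.isGenericPoint_genericPoint_closure :
        IsGenericPoint _ s.carrier)
    have hξt : IsGenericPoint t.isIrreducible'.genericPoint (t : Set X) := by
      exact (by simpa [t.isClosed'.closure_eq] using t.isIrreducible'.isGenericPoint_genericPoint_closure :
        IsGenericPoint _ t.carrier)
    rw [← hξs, ← hξt, hxi]
  exact Order.krullDim_le_of_strictMono g hg
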